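/- For every real δ with 0 < δ < 1/8 and every real t, and every integer n with 2^n > 2/δ, the bound |h_n(−1+δ+it)| ≤ exp(C/δ) holds with an absolute constant C > 0, where h_n(s) = ∏_p (1 + ∑_{m=1}^{2^n−1} 1/(p^{ms+m+1}(1+1/p)) − 1/(p^{2^n s+2^n}(1+1/p))). -/

import Mathlib

set_option maxHeartbeats 1000000

open Complex

noncomputable def hFactor (n : ℕ) (s : ℂ) (p : Nat.Primes) : ℂ :=
  1 + ∑ m ∈ Finset.Icc 1 (2 ^ n - 1 : ℕ),
        1 / ((p : ℂ) ^ ((m : ℂ) * s + (m : ℂ) + 1) * (1 + 1 / (p : ℂ)))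
    - 1 / ((p : ℂ) ^ ((2 : ℂ) ^ n * s + (2 : ℂ) ^ n) * (1 + 1 / (p : ℂ)))

noncomputable def hFun (n : ℕ) (s : ℂ) : ℂ := ∏' p : Nat.Primes, hFactor n s p

-- (1) sum of 1/sqrt m
lemma aux_sqrt_sum (M : ℕ) : ∑ m ∈ Finset.Icc 1 M, (1:ℝ) / Real.sqrt m ≤ 2 * Real.sqrt M := by
  induction M with
  | zero => simp
  | succ M ih =>
    rw [Finset.sum_Icc_succ_top (by omega)]
    have h1 : (0:ℝ) ≤ M := by positivity
    have h2 : Real.sqrt (M+1) > 0 := Real.sqrt_pos.mpr (by positivity)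
    have h3 : Real.sqrt M ^ 2 = M := Real.sq_sqrt h1
    have h4 : Real.sqrt (M+1) ^ 2 = M + 1 := Real.sq_sqrt (by positivity)
    have h5 : Real.sqrt M ≥ 0 := Real.sqrt_nonneg _
    have key : (1:ℝ) / Real.sqrt (M+1) ≤ 2 * Real.sqrt (M+1) - 2 * Real.sqrt M := by
      rw [div_le_iff₀ h2]
      nlinarith [sq_nonneg (Real.sqrt (M+1) - Real.sqrt M)]
    push_cast
    push_cast at ih
    linarith

-- (2) log(1+x) ≤ 2 sqrt x
lemma aux_log_le_two_sqrt {x : ℝ} (hx : 0 ≤ x) : Real.log (1 + x) ≤ 2 * Real.sqrt x := by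
  have h1 : Real.log (1+x) = 2 * Real.log (Real.sqrt (1+x)) := by
    rw [Real.log_sqrt (by linarith)]; ring
  have h2 : Real.log (Real.sqrt (1+x)) ≤ Real.sqrt (1+x) - 1 :=
    Real.log_le_sub_one_of_pos (Real.sqrt_pos.mpr (by linarith))
  have h3 : Real.sqrt (1+x) ≤ 1 + Real.sqrt x := by
    rw [show (1:ℝ) + Real.sqrt x = Real.sqrt ((1 + Real.sqrt x)^2) from
      (Real.sqrt_sq (by positivity)).symm]
    apply Real.sqrt_le_sqrt
    nlinarith [Real.sq_sqrt hx, Real.sqrt_nonneg x]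
  linarith

-- (3) zeta sum bound
lemma aux_tsum_le {σ : ℝ} (hσ : 1 < σ) :
    ∑' n : ℕ, 1 / ((n : ℝ) + 1) ^ σ ≤ 1 + (σ - 1)⁻¹ := by
  have h := ZetaAsymptotics.zeta_limit_aux1 hσ
  have h2 : 0 ≤ ZetaAsymptotics.termTSum σ :=
    tsum_nonneg fun n => ZetaAsymptotics.term_nonneg _ _
  have h3 : (0:ℝ) < σ := by linarith
  have : (1:ℝ)/(σ-1) = (σ-1)⁻¹ := one_div _
  nlinarith [h, mul_nonneg h3.le h2]

lemma primeSum_le {σ : ℝ} (hσ : 1 < σ) :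
    ∑' p : Nat.Primes, (p : ℝ) ^ (-σ) ≤ Real.log (1 + (σ - 1)⁻¹) := by
  have hσ0 : (0:ℝ) < σ := by linarith
  have hp2 : ∀ p : Nat.Primes, (2:ℝ) ≤ ((p:ℕ):ℝ) := fun p => by exact_mod_cast p.2.two_le
  have hxpos : ∀ p : Nat.Primes, 0 < ((p:ℕ):ℝ) ^ (-σ) :=
    fun p => Real.rpow_pos_of_pos (by linarith [hp2 p]) _
  have hxle : ∀ p : Nat.Primes, ((p:ℕ):ℝ) ^ (-σ) ≤ 1/2 := by
    intro p
    have h1 : ((p:ℕ):ℝ) ^ (-σ) ≤ (2:ℝ) ^ (-σ) :=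
      Real.rpow_le_rpow_of_nonpos two_pos (hp2 p) (by linarith)
    have h2 : (2:ℝ) ^ (-σ) ≤ (2:ℝ) ^ (-1:ℝ) :=
      Real.rpow_le_rpow_of_exponent_le one_le_two (by linarith)
    have h3 : (2:ℝ) ^ (-1:ℝ) = 1/2 := by
      rw [Real.rpow_neg_one]; norm_num
    rw [h3] at h2
    linarith
  set L : Nat.Primes → ℝ := fun p => -Real.log (1 - ((p:ℕ):ℝ) ^ (-σ)) with hL
  have h1x : ∀ p : Nat.Primes, (0:ℝ) < 1 - ((p:ℕ):ℝ) ^ (-σ) := fun p => by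
    have := hxle p; linarith
  have hxleL : ∀ p : Nat.Primes, ((p:ℕ):ℝ) ^ (-σ) ≤ L p := by
    intro p
    have := Real.log_le_sub_one_of_pos (h1x p)
    simp only [hL]; linarith
  have hLle : ∀ p : Nat.Primes, L p ≤ 2 * ((p:ℕ):ℝ) ^ (-σ) := by
    intro p
    have h1 : Real.log ((1 - ((p:ℕ):ℝ) ^ (-σ))⁻¹) ≤ (1 - ((p:ℕ):ℝ) ^ (-σ))⁻¹ - 1 :=
      Real.log_le_sub_one_of_pos (inv_pos.mpr (h1x p))
    rw [Real.log_inv] at h1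
    have h2 : (1 - ((p:ℕ):ℝ) ^ (-σ))⁻¹ ≤ 2 := by
      rw [inv_le_comm₀ (h1x p) two_pos]
      have := hxle p; linarith
    have h3 : (1 - ((p:ℕ):ℝ) ^ (-σ))⁻¹ - 1
        = ((p:ℕ):ℝ) ^ (-σ) * (1 - ((p:ℕ):ℝ) ^ (-σ))⁻¹ := by
      field_simp [(h1x p).ne']
      ring
    simp only [hL]
    rw [h3] at h1
    have h4 : ((p:ℕ):ℝ) ^ (-σ) * (1 - ((p:ℕ):ℝ) ^ (-σ))⁻¹ ≤ ((p:ℕ):ℝ) ^ (-σ) * 2 :=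
      mul_le_mul_of_nonneg_left h2 (hxpos p).le
    linarith
  have hsumx : Summable (fun p : Nat.Primes => ((p:ℕ):ℝ) ^ (-σ)) :=
    Nat.Primes.summable_rpow.mpr (by linarith)
  have hsumL : Summable L := by
    apply Summable.of_nonneg_of_le (fun p => by
      have := hxleL p; have := (hxpos p); linarith) hLle (hsumx.mul_left 2)
  -- complex Euler product
  have hres : 1 < ((σ:ℂ)).re := by simpa using hσ
  have hζ := riemannZeta_eulerProduct_exp_log hres
  have hterm : ∀ p : Nat.Primes, -Complex.log (1 - (p:ℂ) ^ (-(σ:ℂ))) = ((L p : ℝ) : ℂ) := by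
    intro p
    have hc : ((p:ℕ):ℂ) ^ (-(σ:ℂ)) = ((((p:ℕ):ℝ) ^ (-σ) : ℝ) : ℂ) := by
      rw [Complex.ofReal_cpow (by positivity)]
      push_cast
      try ring
    have : (1 : ℂ) - (p:ℂ) ^ (-(σ:ℂ)) = (((1 - ((p:ℕ):ℝ) ^ (-σ) : ℝ)) : ℂ) := by
      rw [hc]
      push_cast
      try ring
    rw [this, ← Complex.ofReal_log (h1x p).le]
    simp [hL]
  rw [funext hterm] at hζ
  rw [← Complex.ofReal_tsum] at hζ
  have habs : Real.exp (∑' p, L p) = ‖riemannZeta σ‖ := by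
    rw [← hζ]
    rw [Complex.norm_exp]
    simp
  -- bound on |zeta|
  have hζle : ‖riemannZeta σ‖ ≤ 1 + (σ - 1)⁻¹ := by
    rw [← tsum_riemannZetaSummand hres]
    refine le_trans (norm_tsum_le_tsum_norm (summable_riemannZetaSummand hres)) ?_
    have hnorm : ∀ n : ℕ, ‖riemannZetaSummandHom (ne_zero_of_one_lt_re hres) n‖
        = (n:ℝ) ^ (-σ) := by
      intro n
      simp only [riemannZetaSummandHom, MonoidWithZeroHom.coe_mk, ZeroHom.coe_mk]
      rw [show ((n:ℂ)) = (((n:ℝ)):ℂ) from by push_cast; rfl,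
        Complex.norm_cpow_eq_rpow_re_of_nonneg (Nat.cast_nonneg n) (by simpa using hσ0.ne')]
      simp
    rw [tsum_congr hnorm]
    have hsn : Summable (fun n : ℕ => (n:ℝ) ^ (-σ)) :=
      Real.summable_nat_rpow.mpr (by linarith)
    rw [Summable.tsum_eq_zero_add hsn]
    have h0 : ((0:ℕ):ℝ) ^ (-σ) = 0 := by
      rw [Nat.cast_zero, Real.zero_rpow (by linarith)]
    rw [h0, zero_add]
    have hcongr : ∀ n : ℕ, ((n+1:ℕ):ℝ) ^ (-σ) = 1 / ((n:ℝ) + 1) ^ σ := by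
      intro n
      rw [Real.rpow_neg (by positivity), one_div]
      push_cast
      ring_nf
    rw [tsum_congr hcongr]
    exact aux_tsum_le hσ
  have hζpos : 0 < ‖riemannZeta σ‖ := by
    rw [← habs]; exact Real.exp_pos _
  calc ∑' p : Nat.Primes, ((p:ℕ):ℝ) ^ (-σ) ≤ ∑' p, L p := Summable.tsum_le_tsum hxleL hsumx hsumL
    _ = Real.log (‖riemannZeta σ‖) := by rw [← habs, Real.log_exp]
    _ ≤ Real.log (1 + (σ - 1)⁻¹) := Real.log_le_log hζpos hζle

lemma msum_le {δ : ℝ} (hδ0 : 0 < δ) (hδ : δ < 1/8) (N : ℕ) :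
    ∑ m ∈ Finset.Icc 1 N, (∑' p : Nat.Primes, ((p:ℕ):ℝ) ^ (-(1 + (m:ℝ)*δ))) ≤ 30/δ := by
  have hp2 : ∀ p : Nat.Primes, (2:ℝ) ≤ ((p:ℕ):ℝ) := fun p => by exact_mod_cast p.2.two_le
  have hppos : ∀ p : Nat.Primes, (0:ℝ) < ((p:ℕ):ℝ) := fun p => by linarith [hp2 p]
  set M := ⌈1/δ⌉₊ with hM
  have hM1 : (1:ℝ)/δ ≤ M := Nat.le_ceil _
  have hM2 : (M:ℝ) ≤ 2/δ := by
    have := Nat.ceil_lt_add_one (by positivity : (0:ℝ) ≤ 1/δ)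
    have h8 : (1:ℝ) ≤ 1/δ := by
      rw [le_div_iff₀ hδ0]; linarith
    have h2 : (1:ℝ)/δ + 1 ≤ 2/δ := by
      have : (1:ℝ)/δ + 1/δ = 2/δ := by ring
      linarith
    linarith
  -- first part: per-term bound for small m
  have hsqδ : 0 < Real.sqrt δ := Real.sqrt_pos.mpr hδ0
  have hT1 : ∀ m : ℕ, 1 ≤ m →
      (∑' p : Nat.Primes, ((p:ℕ):ℝ) ^ (-(1 + (m:ℝ)*δ))) ≤ 2 / (Real.sqrt m * Real.sqrt δ) := by
    intro m hm
    have hm0 : (0:ℝ) < m := by exact_mod_cast hm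
    have hmδ : (0:ℝ) < (m:ℝ)*δ := by positivity
    have h1 : (1:ℝ) < 1 + (m:ℝ)*δ := by linarith
    have h2 := primeSum_le h1
    have h3 : (1 + (m:ℝ)*δ - 1)⁻¹ = ((m:ℝ)*δ)⁻¹ := by ring_nf
    rw [h3] at h2
    have h4 : Real.log (1 + ((m:ℝ)*δ)⁻¹) ≤ 2 * Real.sqrt (((m:ℝ)*δ)⁻¹) :=
      aux_log_le_two_sqrt (by positivity)
    have h5 : Real.sqrt (((m:ℝ)*δ)⁻¹) = 1 / (Real.sqrt m * Real.sqrt δ) := by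
      rw [Real.sqrt_inv, Real.sqrt_mul hm0.le, one_div]
    rw [h5] at h4
    calc (∑' p : Nat.Primes, ((p:ℕ):ℝ) ^ (-(1 + (m:ℝ)*δ))) ≤ _ := h2
      _ ≤ 2 * (1/(Real.sqrt m * Real.sqrt δ)) := h4
      _ = 2 / (Real.sqrt m * Real.sqrt δ) := by ring
  -- second part: per-term bound for large m
  have hr0 : (0:ℝ) ≤ (2:ℝ) ^ (-(δ/2)) := (Real.rpow_pos_of_pos two_pos _).le
  have hr1 : (2:ℝ) ^ (-(δ/2)) < 1 :=
    Real.rpow_lt_one_of_one_lt_of_neg one_lt_two (by linarith)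
  have hT2 : ∀ m : ℕ, M < m →
      (∑' p : Nat.Primes, ((p:ℕ):ℝ) ^ (-(1 + (m:ℝ)*δ))) ≤ 2 * ((2:ℝ) ^ (-(δ/2)))^m := by
    intro m hMm
    have hm1 : 1 ≤ m := by omega
    have hm0 : (0:ℝ) < m := by exact_mod_cast hm1
    have hmδ1 : (1:ℝ) ≤ (m:ℝ)*δ := by
      have : (M:ℝ) + 1 ≤ (m:ℝ) := by exact_mod_cast hMm
      have h6 : (1:ℝ)/δ ≤ (m:ℝ) := by linarith
      rw [div_le_iff₀ hδ0] at h6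
      linarith
    have hptw : ∀ p : Nat.Primes, ((p:ℕ):ℝ) ^ (-(1 + (m:ℝ)*δ))
        ≤ (2:ℝ) ^ (-((m:ℝ)*δ/2)) * ((p:ℕ):ℝ) ^ (-(1 + (m:ℝ)*δ/2)) := by
      intro p
      have e1 : ((p:ℕ):ℝ) ^ (-(1 + (m:ℝ)*δ))
          = ((p:ℕ):ℝ) ^ (-((m:ℝ)*δ/2)) * ((p:ℕ):ℝ) ^ (-(1 + (m:ℝ)*δ/2)) := by
        rw [← Real.rpow_add (hppos p)]
        ring_nf
      rw [e1]
      apply mul_le_mul_of_nonneg_right _ (Real.rpow_nonneg (hppos p).le _)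
      exact Real.rpow_le_rpow_of_nonpos two_pos (hp2 p) (by nlinarith)
    have hsum1 : Summable (fun p : Nat.Primes => ((p:ℕ):ℝ) ^ (-(1 + (m:ℝ)*δ))) :=
      Nat.Primes.summable_rpow.mpr (by nlinarith)
    have hsum2 : Summable (fun p : Nat.Primes =>
        (2:ℝ) ^ (-((m:ℝ)*δ/2)) * ((p:ℕ):ℝ) ^ (-(1 + (m:ℝ)*δ/2))) :=
      (Nat.Primes.summable_rpow.mpr (by nlinarith)).mul_left _
    have h7 := Summable.tsum_le_tsum hptw hsum1 hsum2
    rw [tsum_mul_left] at h7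
    have h8 : (1:ℝ) < 1 + (m:ℝ)*δ/2 := by nlinarith
    have h9 := primeSum_le h8
    have h10 : (1 + (m:ℝ)*δ/2 - 1)⁻¹ = ((m:ℝ)*δ/2)⁻¹ := by ring_nf
    rw [h10] at h9
    have h11 : ((m:ℝ)*δ/2)⁻¹ ≤ 2 := by
      rw [inv_le_comm₀ (by nlinarith) two_pos]
      nlinarith
    have h12 : Real.log (1 + ((m:ℝ)*δ/2)⁻¹) ≤ 2 := by
      calc Real.log (1 + ((m:ℝ)*δ/2)⁻¹) ≤ Real.log 3 := by
            apply Real.log_le_log (by positivity)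
            linarith
        _ ≤ 3 - 1 := Real.log_le_sub_one_of_pos (by norm_num)
        _ = 2 := by norm_num
    have h13 : (2:ℝ) ^ (-((m:ℝ)*δ/2)) = ((2:ℝ) ^ (-(δ/2)))^m := by
      rw [← Real.rpow_natCast ((2:ℝ) ^ (-(δ/2))) m, ← Real.rpow_mul (by norm_num)]
      ring_nf
    have hEpos : (0:ℝ) ≤ (2:ℝ) ^ (-((m:ℝ)*δ/2)) := (Real.rpow_pos_of_pos two_pos _).le
    calc (∑' p : Nat.Primes, ((p:ℕ):ℝ) ^ (-(1 + (m:ℝ)*δ)))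
        ≤ (2:ℝ) ^ (-((m:ℝ)*δ/2)) * ∑' p : Nat.Primes, ((p:ℕ):ℝ) ^ (-(1 + (m:ℝ)*δ/2)) := h7
      _ ≤ (2:ℝ) ^ (-((m:ℝ)*δ/2)) * 2 := by
          apply mul_le_mul_of_nonneg_left _ hEpos
          exact le_trans h9 h12
      _ = 2 * ((2:ℝ) ^ (-(δ/2)))^m := by rw [h13]; ring
  -- split the sum
  rw [← Finset.sum_filter_add_sum_filter_not (Finset.Icc 1 N) (fun m => m ≤ M)]
  have hA : ∑ m ∈ (Finset.Icc 1 N).filter (fun m => m ≤ M),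
      (∑' p : Nat.Primes, ((p:ℕ):ℝ) ^ (-(1 + (m:ℝ)*δ))) ≤ 6/δ := by
    have step1 : ∑ m ∈ (Finset.Icc 1 N).filter (fun m => m ≤ M),
        (∑' p : Nat.Primes, ((p:ℕ):ℝ) ^ (-(1 + (m:ℝ)*δ)))
        ≤ ∑ m ∈ (Finset.Icc 1 N).filter (fun m => m ≤ M), 2 / (Real.sqrt m * Real.sqrt δ) := by
      apply Finset.sum_le_sum
      intro m hm
      simp only [Finset.mem_filter, Finset.mem_Icc] at hm
      exact hT1 m hm.1.1
    have step2 : ∑ m ∈ (Finset.Icc 1 N).filter (fun m => m ≤ M), 2 / (Real.sqrt m * Real.sqrt δ)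
        ≤ ∑ m ∈ Finset.Icc 1 M, 2 / (Real.sqrt m * Real.sqrt δ) := by
      apply Finset.sum_le_sum_of_subset_of_nonneg
      · intro m hm
        simp only [Finset.mem_filter, Finset.mem_Icc] at hm ⊢
        exact ⟨hm.1.1, hm.2⟩
      · intro m _ _
        positivity
    have step3 : ∑ m ∈ Finset.Icc 1 M, 2 / (Real.sqrt m * Real.sqrt δ)
        = (2 / Real.sqrt δ) * ∑ m ∈ Finset.Icc 1 M, 1 / Real.sqrt m := by
      rw [Finset.mul_sum]
      apply Finset.sum_congr rfl
      intro m _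
      ring
    have step4 : (2 / Real.sqrt δ) * ∑ m ∈ Finset.Icc 1 M, (1:ℝ) / Real.sqrt m
        ≤ (2 / Real.sqrt δ) * (2 * Real.sqrt M) := by
      apply mul_le_mul_of_nonneg_left (aux_sqrt_sum M) (by positivity)
    have step5 : (2 / Real.sqrt δ) * (2 * Real.sqrt M) ≤ 6/δ := by
      have e1 : Real.sqrt M ≤ Real.sqrt (2/δ) := Real.sqrt_le_sqrt hM2
      have e2 : Real.sqrt (2/δ) = Real.sqrt 2 / Real.sqrt δ :=
        Real.sqrt_div (by norm_num) δ
      have e3 : Real.sqrt δ * Real.sqrt δ = δ := Real.mul_self_sqrt hδ0.le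
      have e4 : Real.sqrt 2 ≤ 3/2 := by
        nlinarith [Real.sq_sqrt (by norm_num : (0:ℝ) ≤ 2), Real.sqrt_nonneg 2]
      have e5 : (2 / Real.sqrt δ) * (2 * Real.sqrt M)
          ≤ (2 / Real.sqrt δ) * (2 * (Real.sqrt 2 / Real.sqrt δ)) := by
        rw [← e2]
        apply mul_le_mul_of_nonneg_left (by linarith) (by positivity)
      have e6 : (2 / Real.sqrt δ) * (2 * (Real.sqrt 2 / Real.sqrt δ)) = 4 * Real.sqrt 2 / δ := by
        rw [← e3]
        field_simp
        ring
        rw [Real.sqrt_sq hsqδ.le]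
      rw [e6] at e5
      have e7 : 4 * Real.sqrt 2 / δ ≤ 6 / δ := by
        gcongr
        linarith
      linarith
    calc _ ≤ _ := step1
      _ ≤ _ := step2
      _ = _ := step3
      _ ≤ _ := step4
      _ ≤ _ := step5
  have hB : ∑ m ∈ (Finset.Icc 1 N).filter (fun m => ¬ m ≤ M),
      (∑' p : Nat.Primes, ((p:ℕ):ℝ) ^ (-(1 + (m:ℝ)*δ))) ≤ 24/δ := by
    have hgeom : Summable (fun m : ℕ => 2 * ((2:ℝ) ^ (-(δ/2)))^m) :=
      (summable_geometric_of_lt_one hr0 hr1).mul_left 2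
    have step1 : ∑ m ∈ (Finset.Icc 1 N).filter (fun m => ¬ m ≤ M),
        (∑' p : Nat.Primes, ((p:ℕ):ℝ) ^ (-(1 + (m:ℝ)*δ)))
        ≤ ∑ m ∈ (Finset.Icc 1 N).filter (fun m => ¬ m ≤ M), 2 * ((2:ℝ) ^ (-(δ/2)))^m := by
      apply Finset.sum_le_sum
      intro m hm
      simp only [Finset.mem_filter, Finset.mem_Icc, not_le] at hm
      exact hT2 m hm.2
    have step2 : ∑ m ∈ (Finset.Icc 1 N).filter (fun m => ¬ m ≤ M), 2 * ((2:ℝ) ^ (-(δ/2)))^m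
        ≤ ∑' m : ℕ, 2 * ((2:ℝ) ^ (-(δ/2)))^m :=
      Summable.sum_le_tsum _ (fun m _ => by positivity) hgeom
    have step3 : ∑' m : ℕ, 2 * ((2:ℝ) ^ (-(δ/2)))^m = 2 * (1 - (2:ℝ) ^ (-(δ/2)))⁻¹ := by
      rw [tsum_mul_left, tsum_geometric_of_lt_one hr0 hr1]
    have step4 : (1 - (2:ℝ) ^ (-(δ/2)))⁻¹ ≤ 1 + 4/δ := by
      set y := Real.log 2 * (δ/2) with hy
      have hlog2 : (1:ℝ)/2 ≤ Real.log 2 := by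
        have := Real.log_two_gt_d9
        linarith
      have hy0 : 0 < y := by
        rw [hy]; positivity
      have hrexp : (2:ℝ) ^ (-(δ/2)) = Real.exp (-y) := by
        rw [Real.rpow_def_of_pos two_pos, hy]
        ring_nf
      have hexp : Real.exp (-y) ≤ (1+y)⁻¹ := by
        rw [Real.exp_neg]
        apply inv_anti₀ (by linarith)
        exact Real.add_one_le_exp y |>.trans_eq' (by ring)
      have h1r : y/(1+y) ≤ 1 - (2:ℝ) ^ (-(δ/2)) := by
        rw [hrexp]
        have : y/(1+y) = 1 - (1+y)⁻¹ := by
          field_simp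
          ring
        rw [this]
        linarith
      have hypos : 0 < y/(1+y) := by positivity
      have inv1 : (1 - (2:ℝ) ^ (-(δ/2)))⁻¹ ≤ (y/(1+y))⁻¹ := by
        apply inv_anti₀ hypos h1r
      have inv2 : (y/(1+y))⁻¹ = 1 + 1/y := by
        field_simp
        ring
      have inv3 : 1/y ≤ 4/δ := by
        rw [hy]
        rw [div_le_div_iff₀ (by positivity) hδ0]
        nlinarith
      rw [inv2] at inv1
      linarith
    calc _ ≤ _ := step1
      _ ≤ _ := step2
      _ = _ := step3
      _ ≤ 2 * (1 + 4/δ) := by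
          apply mul_le_mul_of_nonneg_left step4 (by norm_num)
      _ ≤ 24/δ := by
          have : (2:ℝ) ≤ 16/δ := by
            rw [le_div_iff₀ hδ0]; nlinarith
          have h8 : (8:ℝ)/δ ≤ 8/δ := le_refl _
          have : 2 * (1 + 4/δ) = 2 + 8/δ := by ring
          rw [this]
          have h16 : (2:ℝ) ≤ 16/δ := by
            rw [le_div_iff₀ hδ0]; nlinarith
          have h17 : (16:ℝ)/δ + 8/δ = 24/δ := by ring
          linarith
  have h30 : (6:ℝ)/δ + 24/δ = 30/δ := by ring
  linarith [hA, hB]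

lemma aux_term (p : Nat.Primes) (z : ℂ) :
    ‖1 / ((p:ℂ) ^ z * (1 + 1/(p:ℂ)))‖ ≤ ((p:ℕ):ℝ) ^ (-z.re) := by
  have hp2 : (2:ℝ) ≤ ((p:ℕ):ℝ) := by exact_mod_cast p.2.two_le
  have hp0 : (0:ℝ) < ((p:ℕ):ℝ) := by linarith
  have hcast : ((p:Nat.Primes):ℂ) = ((((p:ℕ):ℝ)):ℂ) := by push_cast; rfl
  rw [norm_div, norm_one, norm_mul]
  have h1 : ‖(p:ℂ)^z‖ = ((p:ℕ):ℝ)^z.re := by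
    rw [hcast, Complex.norm_cpow_eq_rpow_re_of_pos hp0]
  have h2 : (1:ℝ) ≤ ‖1 + 1/(p:ℂ)‖ := by
    have e : (1:ℂ) + 1/(p:ℂ) = (((1 + 1/((p:ℕ):ℝ)):ℝ):ℂ) := by
      rw [hcast]; push_cast; ring
    rw [e]
    simp only [Complex.norm_real, Real.norm_eq_abs]
    rw [_root_.abs_of_nonneg (by positivity : (0:ℝ) ≤ 1 + 1/((p:ℕ):ℝ))]
    have : 0 < 1/((p:ℕ):ℝ) := by positivity
    linarith
  rw [h1, Real.rpow_neg hp0.le, ← one_div]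
  have hA : (0:ℝ) < ((p:ℕ):ℝ)^z.re := Real.rpow_pos_of_pos hp0 _
  apply one_div_le_one_div_of_le hA
  exact le_mul_of_one_le_right hA.le h2

lemma re_aux (δ t : ℝ) (m : ℕ) :
    ((m:ℂ) * (-1 + (δ:ℂ) + (t:ℂ)*I) + (m:ℂ) + 1).re = 1 + (m:ℝ)*δ := by
  simp [Complex.add_re, Complex.mul_re]
  ring

lemma re_aux2 (δ t : ℝ) (n : ℕ) :
    ((2:ℂ)^n * (-1 + (δ:ℂ) + (t:ℂ)*I) + (2:ℂ)^n).re = 2^n * δ := by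
  have h : ((2:ℂ)^n) = (((2:ℝ)^n : ℝ) : ℂ) := by push_cast; rfl
  rw [h, Complex.add_re, Complex.re_ofReal_mul, Complex.ofReal_re]
  simp [Complex.add_re, Complex.mul_re]
  ring

lemma factor_bound {n : ℕ} {δ t : ℝ} (hδ0 : 0 < δ) (h2 : 2 ≤ 2^n * δ) (p : Nat.Primes) :
    ‖hFactor n (-1 + (δ:ℂ) + (t:ℂ)*I) p - 1‖ ≤
      (∑ m ∈ Finset.Icc 1 (2^n - 1 : ℕ), ((p:ℕ):ℝ)^(-(1+(m:ℝ)*δ))) + ((p:ℕ):ℝ)^(-(2:ℝ)) := by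
  have hp2 : (2:ℝ) ≤ ((p:ℕ):ℝ) := by exact_mod_cast p.2.two_le
  have e0 : hFactor n (-1 + (δ:ℂ) + (t:ℂ)*I) p - 1 =
      (∑ m ∈ Finset.Icc 1 (2 ^ n - 1 : ℕ),
        1 / ((p : ℂ) ^ ((m : ℂ) * (-1 + (δ:ℂ) + (t:ℂ)*I) + (m : ℂ) + 1) * (1 + 1 / (p : ℂ))))
      - 1 / ((p : ℂ) ^ ((2 : ℂ) ^ n * (-1 + (δ:ℂ) + (t:ℂ)*I) + (2 : ℂ) ^ n) * (1 + 1 / (p : ℂ))) := by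
    unfold hFactor; ring
  rw [e0]
  refine le_trans (norm_sub_le _ _) (add_le_add ?_ ?_)
  · refine le_trans (norm_sum_le _ _) (Finset.sum_le_sum ?_)
    intro m hm
    have h := aux_term p ((m:ℂ) * (-1 + (δ:ℂ) + (t:ℂ)*I) + (m : ℂ) + 1)
    rw [re_aux δ t m] at h
    exact h
  · have h := aux_term p ((2:ℂ)^n * (-1 + (δ:ℂ) + (t:ℂ)*I) + (2:ℂ)^n)
    rw [re_aux2 δ t n] at h
    refine le_trans h ?_
    exact Real.rpow_le_rpow_of_exponent_le (by linarith) (by linarith)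

theorem hn_bound :
    ∃ C : ℝ, 0 < C ∧ ∀ δ t : ℝ, 0 < δ → δ < 1 / 8 → ∀ n : ℕ,
      2 / δ < (2 : ℝ) ^ n →
      ‖hFun n (-1 + δ + t * I)‖ ≤ Real.exp (C / δ) := by
  refine ⟨31, by norm_num, fun δ t hδ0 hδ8 n h2n => ?_⟩
  have h2δ : 2 ≤ (2:ℝ)^n * δ := by
    rw [div_lt_iff₀ hδ0] at h2n
    linarith
  have h2δ' : (2:ℝ) ≤ 2^n * δ := h2δ
  -- the bounding sequence
  set a : Nat.Primes → ℝ := fun p =>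
    (∑ m ∈ Finset.Icc 1 (2^n - 1 : ℕ), ((p:ℕ):ℝ)^(-(1+(m:ℝ)*δ))) + ((p:ℕ):ℝ)^(-(2:ℝ)) with ha
  have ha_nonneg : ∀ p, 0 ≤ a p := by
    intro p
    have hp2 : (2:ℝ) ≤ ((p:ℕ):ℝ) := by exact_mod_cast p.2.two_le
    have : (0:ℝ) < ((p:ℕ):ℝ) := by linarith
    apply add_nonneg
    · apply Finset.sum_nonneg
      intro m _
      positivity
    · positivity
  have hsum_m : ∀ m ∈ Finset.Icc 1 (2^n - 1 : ℕ),
      Summable (fun p : Nat.Primes => ((p:ℕ):ℝ)^(-(1+(m:ℝ)*δ))) := by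
    intro m hm
    simp only [Finset.mem_Icc] at hm
    have hm1 : (1:ℝ) ≤ m := by exact_mod_cast hm.1
    apply Nat.Primes.summable_rpow.mpr
    nlinarith
  have hsum2 : Summable (fun p : Nat.Primes => ((p:ℕ):ℝ)^(-(2:ℝ))) :=
    Nat.Primes.summable_rpow.mpr (by norm_num)
  have ha_sum : Summable a := (summable_sum hsum_m).add hsum2
  have ha_tsum : ∑' p, a p ≤ 31/δ := by
    rw [ha, Summable.tsum_add (summable_sum hsum_m) hsum2, Summable.tsum_finsetSum hsum_m]
    have h1 := msum_le hδ0 hδ8 (2^n - 1)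
    have h2 : ∑' p : Nat.Primes, ((p:ℕ):ℝ)^(-(2:ℝ)) ≤ 1 := by
      have := primeSum_le (by norm_num : (1:ℝ) < 2)
      have e : ((2:ℝ) - 1)⁻¹ = 1 := by norm_num
      rw [e] at this
      have hlog : Real.log (1+1) ≤ 1 := by
        have := Real.log_le_sub_one_of_pos (by norm_num : (0:ℝ) < 2)
        norm_num at this ⊢
        linarith
      linarith
    have h3 : (30:ℝ)/δ + 1 ≤ 31/δ := by
      have : (1:ℝ) ≤ 1/δ := by
        rw [le_div_iff₀ hδ0]; linarith
      have e : (30:ℝ)/δ + 1/δ = 31/δ := by ring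
      linarith
    linarith
  have hE : ∀ p : Nat.Primes, ‖hFactor n (-1 + (δ:ℂ) + (t:ℂ)*I) p - 1‖ ≤ a p :=
    fun p => factor_bound hδ0 h2δ' p
  by_cases hz : ∃ p : Nat.Primes, hFactor n (-1 + (δ:ℂ) + (t:ℂ)*I) p = 0
  · obtain ⟨p0, hp0⟩ := hz
    have hprod : HasProd (hFactor n (-1 + (δ:ℂ) + (t:ℂ)*I)) 0 := by
      have hev : ∀ᶠ (F : Finset Nat.Primes) in Filter.atTop,
          (0:ℂ) = ∏ p ∈ F, hFactor n (-1 + (δ:ℂ) + (t:ℂ)*I) p := by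
        refine Filter.eventually_atTop.mpr ⟨{p0}, fun F hF => ?_⟩
        exact (Finset.prod_eq_zero (hF (Finset.mem_singleton_self p0)) hp0).symm
      exact tendsto_const_nhds.congr' hev
    have : hFun n (-1 + (δ:ℂ) + (t:ℂ)*I) = 0 := hprod.tprod_eq
    rw [this]
    simp only [norm_zero]
    positivity
  · push_neg at hz
    have hEsum : Summable (fun p : Nat.Primes => hFactor n (-1 + (δ:ℂ) + (t:ℂ)*I) p - 1) := by
      apply Summable.of_norm
      exact Summable.of_nonneg_of_le (fun p => norm_nonneg _) hE ha_sum
    have hlog : Summable (fun p : Nat.Primes =>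
        Complex.log (hFactor n (-1 + (δ:ℂ) + (t:ℂ)*I) p)) := by
      have h := Summable.clog_one_sub hEsum.neg
      exact h.congr fun p => congrArg Complex.log (by ring)
    have hprodeq : hFun n (-1 + (δ:ℂ) + (t:ℂ)*I)
        = Complex.exp (∑' p : Nat.Primes,
            Complex.log (hFactor n (-1 + (δ:ℂ) + (t:ℂ)*I) p)) := by
      have h := Complex.cexp_tsum_eq_tprod
        (f := fun p => hFactor n (-1 + (δ:ℂ) + (t:ℂ)*I) p)
        (fun p => hz p) hlog
      exact h.symm
    rw [hprodeq, Complex.norm_exp]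
    apply Real.exp_le_exp.mpr
    have hre : (∑' p : Nat.Primes,
        Complex.log (hFactor n (-1 + (δ:ℂ) + (t:ℂ)*I) p)).re
        = ∑' p : Nat.Primes,
          (Complex.log (hFactor n (-1 + (δ:ℂ) + (t:ℂ)*I) p)).re := by
      exact Complex.re_tsum hlog
    rw [hre]
    have hre_sum : Summable (fun p : Nat.Primes =>
        (Complex.log (hFactor n (-1 + (δ:ℂ) + (t:ℂ)*I) p)).re) :=
      (Complex.hasSum_re hlog.hasSum).summable
    have hre_le : ∀ p : Nat.Primes,
        (Complex.log (hFactor n (-1 + (δ:ℂ) + (t:ℂ)*I) p)).re ≤ a p := by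
      intro p
      rw [Complex.log_re]
      have habs : ‖hFactor n (-1 + (δ:ℂ) + (t:ℂ)*I) p‖ ≤ 1 + a p := by
        have h1 : ‖hFactor n (-1 + (δ:ℂ) + (t:ℂ)*I) p‖
            ≤ 1 + ‖hFactor n (-1 + (δ:ℂ) + (t:ℂ)*I) p - 1‖ := by
          calc ‖hFactor n (-1 + (δ:ℂ) + (t:ℂ)*I) p‖
              = ‖1 + (hFactor n (-1 + (δ:ℂ) + (t:ℂ)*I) p - 1)‖ := by ring_nf
            _ ≤ ‖(1:ℂ)‖ + ‖hFactor n (-1 + (δ:ℂ) + (t:ℂ)*I) p - 1‖ := norm_add_le _ _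
            _ = 1 + ‖hFactor n (-1 + (δ:ℂ) + (t:ℂ)*I) p - 1‖ := by rw [norm_one]
        linarith [hE p]
      have hpos : 0 < ‖hFactor n (-1 + (δ:ℂ) + (t:ℂ)*I) p‖ := by
        rw [norm_pos_iff]
        exact hz p
      calc Real.log (‖hFactor n (-1 + (δ:ℂ) + (t:ℂ)*I) p‖)
          ≤ Real.log (1 + a p) := Real.log_le_log hpos habs
        _ ≤ (1 + a p) - 1 := Real.log_le_sub_one_of_pos (by linarith [ha_nonneg p])
        _ = a p := by ring
    calc ∑' p : Nat.Primes, (Complex.log (hFactor n (-1 + (δ:ℂ) + (t:ℂ)*I) p)).re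
        ≤ ∑' p, a p := Summable.tsum_le_tsum hre_le hre_sum ha_sum
      _ ≤ 31/δ := ha_tsum
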